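/- Let Φ be the D_4 root system {±e_i ± e_j : 1 ≤ i < j ≤ 4} (with both sign choices, giving 24 roots), Φ_{X_1} = {±(e_i - e_j) : 1 ≤ i < j ≤ 4} and Φ_{X_2} = {±(e_1 - e_2), ±(e_3 + e_4)}. Then for any map σ: ℝ^4 → ℝ^4 given by a signed permutation with an even number of sign changes (Weyl group of D_4), |Φ_{X_2} ∩ σ(Φ_{X_1})| ≥ 2. -/

import Mathlib

/-- The `SU(4)` subsystem `Φ_{X₁} = {±(e_i - e_j)}` of `D₄`. -/
def PhiX1 : Set (Fin 4 → ℝ) :=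
  {v | ∃ i j : Fin 4, i ≠ j ∧ v = Pi.single i 1 - Pi.single j 1}

/-- The subsystem `Φ_{X₂} = {±(e₁ - e₂), ±(e₃ + e₄)}` of `D₄`. -/
def PhiX2 : Set (Fin 4 → ℝ) :=
  {v | v = Pi.single (0 : Fin 4) 1 - Pi.single 1 1 ∨
       v = Pi.single (1 : Fin 4) 1 - Pi.single 0 1 ∨
       v = Pi.single (2 : Fin 4) 1 + Pi.single 3 1 ∨
       v = -(Pi.single (2 : Fin 4) 1 + Pi.single 3 1)}

/-- Every image of the `SU(4)` subsystem `Φ_{X₁}` under an element of the Weyl group of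
`D₄` (a signed permutation with an even number of sign changes) meets `Φ_{X₂}` in at
least two roots. -/
theorem stmt13 (g : (Fin 4 → ℝ) → (Fin 4 → ℝ))
    (hg : ∃ (π : Equiv.Perm (Fin 4)) (ε : Fin 4 → ℝ),
      (∀ i, ε i = 1 ∨ ε i = -1) ∧ (∏ i, ε i) = 1 ∧
      ∀ (x : Fin 4 → ℝ) (i : Fin 4), g x i = ε i * x (π i)) :
    2 ≤ (PhiX2 ∩ g '' PhiX1).ncard := by
  obtain ⟨π, ε, hε, hprod, hg⟩ := hg
  have hfin : PhiX2.Finite := by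
    have hsub : PhiX2 ⊆ ({Pi.single (0 : Fin 4) 1 - Pi.single 1 1,
        Pi.single (1 : Fin 4) 1 - Pi.single 0 1,
        Pi.single (2 : Fin 4) 1 + Pi.single 3 1,
        -(Pi.single (2 : Fin 4) 1 + Pi.single 3 1)} : Set (Fin 4 → ℝ)) := by
      intro v hv
      rcases hv with h | h | h | h <;> simp [h]
    exact Set.Finite.subset (Set.toFinite _) hsub
  have key : ∀ i j : Fin 4, i ≠ j →
      g (Pi.single (π i) 1 - Pi.single (π j) 1) ∈ g '' PhiX1 ∧
      ∀ k, g (Pi.single (π i) 1 - Pi.single (π j) 1) k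
        = if k = i then ε i else if k = j then -(ε j) else 0 := by
    intro i j hij
    refine ⟨⟨_, ⟨π i, π j, by simpa using hij, rfl⟩, rfl⟩, ?_⟩
    intro k
    rw [hg]
    simp only [Pi.sub_apply, Pi.single_apply, EmbeddingLike.apply_eq_iff_eq]
    rcases eq_or_ne k i with rfl | hki
    · simp [Ne.symm hij, hij]
    · rcases eq_or_ne k j with rfl | hkj
      · simp [hki]
      · simp [hki, hkj]
  have final : ∀ v : Fin 4 → ℝ, v ∈ PhiX2 ∩ g '' PhiX1 → -v ∈ PhiX2 ∩ g '' PhiX1 →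
      v ≠ -v → 2 ≤ (PhiX2 ∩ g '' PhiX1).ncard := by
    intro v hv hnv hne
    have hsub : ({v, -v} : Set (Fin 4 → ℝ)) ⊆ PhiX2 ∩ g '' PhiX1 := by
      intro x hx
      rcases hx with rfl | rfl
      · exact hv
      · exact hnv
    calc 2 = ({v, -v} : Set (Fin 4 → ℝ)).ncard := (Set.ncard_pair hne).symm
      _ ≤ _ := Set.ncard_le_ncard hsub (hfin.inter_of_left _)
  have hprod' : ε 0 * ε 1 * ε 2 * ε 3 = 1 := by
    simpa [Fin.prod_univ_four] using hprod
  -- helper to build image elements equal to a target vector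
  have build : ∀ (i j : Fin 4) (w : Fin 4 → ℝ), i ≠ j →
      (∀ k, w k = if k = i then ε i else if k = j then -(ε j) else 0) →
      w ∈ g '' PhiX1 := by
    intro i j w hij hw
    obtain ⟨hm, hf⟩ := key i j hij
    have : w = g (Pi.single (π i) 1 - Pi.single (π j) 1) := by
      funext k; rw [hw, hf]
    rw [this]; exact hm
  rcases eq_or_ne (ε 0) (ε 1) with h01 | h01
  · -- use ±(e0 - e1)
    set v : Fin 4 → ℝ := Pi.single (0 : Fin 4) 1 - Pi.single 1 1 with hv
    have hv2 : v ∈ PhiX2 := Or.inl rfl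
    have hnv2 : -v ∈ PhiX2 := Or.inr (Or.inl (by funext k; fin_cases k <;>
      simp [hv, Pi.single_apply]))
    rcases hε 0 with e0 | e0
    · have e1 : ε 1 = 1 := h01 ▸ e0
      have hvm : v ∈ g '' PhiX1 := build 0 1 v (by decide)
        (fun k => by fin_cases k <;> simp [hv, Pi.single_apply, e0, e1])
      have hnvm : -v ∈ g '' PhiX1 := build 1 0 (-v) (by decide)
        (fun k => by fin_cases k <;> simp [hv, Pi.single_apply, e0, e1])
      refine final v ⟨hv2, hvm⟩ ⟨hnv2, hnvm⟩ ?_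
      intro h
      have := congrFun h 0
      simp [hv, Pi.single_apply] at this
      norm_num at this
    · have e1 : ε 1 = -1 := h01 ▸ e0
      have hvm : v ∈ g '' PhiX1 := build 1 0 v (by decide)
        (fun k => by fin_cases k <;> simp [hv, Pi.single_apply, e0, e1])
      have hnvm : -v ∈ g '' PhiX1 := build 0 1 (-v) (by decide)
        (fun k => by fin_cases k <;> simp [hv, Pi.single_apply, e0, e1])
      refine final v ⟨hv2, hvm⟩ ⟨hnv2, hnvm⟩ ?_
      intro h
      have := congrFun h 0
      simp [hv, Pi.single_apply] at this
      norm_num at this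
  · -- ε0 ≠ ε1 forces ε2 ≠ ε3
    have h23 : ε 2 ≠ ε 3 := by
      rcases hε 0 with e0 | e0 <;> rcases hε 1 with e1 | e1 <;>
        rcases hε 2 with e2 | e2 <;> rcases hε 3 with e3 | e3 <;>
        simp [e0, e1, e2, e3] at h01 hprod' ⊢ <;> norm_num at *
    set v : Fin 4 → ℝ := Pi.single (2 : Fin 4) 1 + Pi.single 3 1 with hv
    have hv2 : v ∈ PhiX2 := Or.inr (Or.inr (Or.inl rfl))
    have hnv2 : -v ∈ PhiX2 := Or.inr (Or.inr (Or.inr rfl))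
    rcases hε 2 with e2 | e2
    · have e3 : ε 3 = -1 := by
        rcases hε 3 with e3 | e3
        · exact absurd (e2.trans e3.symm) h23
        · exact e3
      have hvm : v ∈ g '' PhiX1 := build 2 3 v (by decide)
        (fun k => by fin_cases k <;> simp [hv, Pi.single_apply, e2, e3])
      have hnvm : -v ∈ g '' PhiX1 := build 3 2 (-v) (by decide)
        (fun k => by fin_cases k <;> simp [hv, Pi.single_apply, e2, e3])
      refine final v ⟨hv2, hvm⟩ ⟨hnv2, hnvm⟩ ?_
      intro h
      have := congrFun h 2
      simp [hv, Pi.single_apply] at this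
      norm_num at this
    · have e3 : ε 3 = 1 := by
        rcases hε 3 with e3 | e3
        · exact e3
        · exact absurd (e2.trans e3.symm) h23
      have hvm : v ∈ g '' PhiX1 := build 3 2 v (by decide)
        (fun k => by fin_cases k <;> simp [hv, Pi.single_apply, e2, e3])
      have hnvm : -v ∈ g '' PhiX1 := build 2 3 (-v) (by decide)
        (fun k => by fin_cases k <;> simp [hv, Pi.single_apply, e2, e3])
      refine final v ⟨hv2, hvm⟩ ⟨hnv2, hnvm⟩ ?_
      intro h
      have := congrFun h 2
      simp [hv, Pi.single_apply] at this
      norm_num at this
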